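/- For X ∼ Gumbel(v, 1) (density f(x) = exp(−((x−v)+e^{−(x−v)}))) and independent Y ∼ Gumbel(w, 1), it holds that E[X | X ≥ Y] = γ + log(e^v + e^w), where γ is the Euler–Mascheroni constant. -/

import Mathlib

open MeasureTheory ProbabilityTheory Set Filter
open scoped Topology NNReal ENNReal


lemma aux_abs_log_le {t : ℝ} (ht : 0 < t) : |Real.log t| ≤ 2 * (Real.sqrt t)⁻¹ + t := by
  have hs : 0 < Real.sqrt t := Real.sqrt_pos.mpr ht
  rcases le_or_gt 1 t with h | h
  · rw [abs_of_nonneg (Real.log_nonneg h)]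
    have := Real.log_le_sub_one_of_pos ht
    have : Real.log t ≤ t := by linarith
    have h2 : 0 ≤ 2 * (Real.sqrt t)⁻¹ := by positivity
    linarith
  · rw [abs_of_nonpos (Real.log_nonpos ht.le h.le)]
    have h1 : Real.log ((Real.sqrt t)⁻¹) ≤ (Real.sqrt t)⁻¹ - 1 :=
      Real.log_le_sub_one_of_pos (by positivity)
    have h2 : Real.log ((Real.sqrt t)⁻¹) = - Real.log (Real.sqrt t) := Real.log_inv _
    have h3 : Real.log (Real.sqrt t) = Real.log t / 2 := Real.log_sqrt ht.le
    nlinarith [ht.le]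

lemma aux_intble_log_exp :
    IntegrableOn (fun t => Real.log t * Real.exp (-t)) (Ioi (0:ℝ)) := by
  have h1 := Real.GammaIntegral_convergent (by norm_num : (0:ℝ) < 1/2)
  have h2 := Real.GammaIntegral_convergent (by norm_num : (0:ℝ) < 2)
  have hm : AEStronglyMeasurable (fun t => Real.log t * Real.exp (-t))
      (volume.restrict (Ioi (0:ℝ))) :=
    (Real.measurable_log.mul (Real.measurable_exp.comp measurable_neg)).aestronglyMeasurable
  refine Integrable.mono' ((h1.const_mul 2).add h2) hm ?_
  filter_upwards [ae_restrict_mem measurableSet_Ioi] with t ht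
  have ht' : (0:ℝ) < t := ht
  have hb := aux_abs_log_le ht'
  have he : 0 < Real.exp (-t) := Real.exp_pos _
  have hr1 : t ^ ((1:ℝ)/2 - 1) = (Real.sqrt t)⁻¹ := by
    rw [show (1:ℝ)/2 - 1 = -(1/2) by norm_num, Real.rpow_neg ht'.le, ← Real.sqrt_eq_rpow]
  have hr2 : t ^ ((2:ℝ) - 1) = t := by
    norm_num
  have key : |Real.log t * Real.exp (-t)| ≤ 2 * (Real.exp (-t) * (Real.sqrt t)⁻¹)
      + Real.exp (-t) * t := by
    rw [abs_mul, abs_of_pos he]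
    nlinarith [abs_nonneg (Real.log t)]
  calc ‖Real.log t * Real.exp (-t)‖ = |Real.log t * Real.exp (-t)| := rfl
    _ ≤ 2 * (Real.exp (-t) * (Real.sqrt t)⁻¹) + Real.exp (-t) * t := key
    _ = 2 * (Real.exp (-t) * t ^ ((1:ℝ)/2 - 1)) + Real.exp (-t) * t ^ ((2:ℝ) - 1) := by
        rw [hr1, hr2]

lemma aux_integral_log_exp :
    ∫ t in Ioi (0:ℝ), Real.log t * Real.exp (-t) = -Real.eulerMascheroniConstant := by
  have h1 := Complex.hasDerivAt_GammaIntegral (s := 1) (by norm_num)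
  have h2 : HasDerivAt Complex.GammaIntegral
      ((∫ t in Ioi (0:ℝ), Real.log t * Real.exp (-t) : ℝ) : ℂ) 1 := by
    convert h1 using 1
    rw [show ((∫ t in Ioi (0:ℝ), Real.log t * Real.exp (-t) : ℝ) : ℂ)
        = ∫ t in Ioi (0:ℝ), ((Real.log t * Real.exp (-t) : ℝ) : ℂ) from (integral_ofReal).symm]
    refine integral_congr_ae (Eventually.of_forall fun t => ?_)
    simp
  have h3 : Complex.Gamma =ᶠ[𝓝 (1:ℂ)] Complex.GammaIntegral := by
    have hopen : IsOpen {s : ℂ | 0 < s.re} := isOpen_lt continuous_const Complex.continuous_re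
    filter_upwards [hopen.mem_nhds (by norm_num : (0:ℝ) < (1:ℂ).re)] with s hs
    exact Complex.Gamma_eq_integral hs
  have h4 : HasDerivAt Complex.Gamma
      ((∫ t in Ioi (0:ℝ), Real.log t * Real.exp (-t) : ℝ) : ℂ) 1 :=
    h2.congr_of_eventuallyEq h3
  have h5 := Complex.hasDerivAt_Gamma_one
  have h6 := h4.unique h5
  exact_mod_cast h6

lemma aux_intble_exp_mul {c : ℝ} (hc : 0 < c) :
    IntegrableOn (fun t => Real.exp (-(c * t))) (Ioi (0:ℝ)) := by
  simpa [neg_mul] using exp_neg_integrableOn_Ioi 0 hc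

lemma aux_integral_exp_mul {c : ℝ} (hc : 0 < c) :
    ∫ t in Ioi (0:ℝ), Real.exp (-(c * t)) = 1 / c := by
  have := integral_comp_mul_left_Ioi (fun x => Real.exp (-x)) 0 hc
  simp only [mul_zero] at this
  rw [this, integral_exp_neg_Ioi]
  simp [one_div]

lemma aux_intble_log_exp_mul {c : ℝ} (hc : 0 < c) :
    IntegrableOn (fun t => Real.log t * Real.exp (-(c * t))) (Ioi (0:ℝ)) := by
  have h1 : IntegrableOn (fun t => Real.log (c * t) * Real.exp (-(c * t))) (Ioi (0:ℝ)) := by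
    have := (integrableOn_Ioi_comp_mul_left_iff
      (fun t => Real.log t * Real.exp (-t)) 0 hc).mpr (by simpa using aux_intble_log_exp)
    simpa using this
  have h2 := (aux_intble_exp_mul hc).const_mul (Real.log c)
  refine IntegrableOn.congr_fun (h1.sub h2) (fun t ht => ?_) measurableSet_Ioi
  simp only [Pi.sub_apply]
  rw [Real.log_mul hc.ne' (ne_of_gt ht)]
  ring

lemma aux_integral_log_exp_mul {c : ℝ} (hc : 0 < c) :
    ∫ t in Ioi (0:ℝ), Real.log t * Real.exp (-(c * t))
      = -(Real.eulerMascheroniConstant + Real.log c) / c := by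
  have h1 : IntegrableOn (fun t => Real.log (c * t) * Real.exp (-(c * t))) (Ioi (0:ℝ)) := by
    have := (integrableOn_Ioi_comp_mul_left_iff
      (fun t => Real.log t * Real.exp (-t)) 0 hc).mpr (by simpa using aux_intble_log_exp)
    simpa using this
  have h2 := (aux_intble_exp_mul hc).const_mul (Real.log c)
  have hcong : ∫ t in Ioi (0:ℝ), Real.log t * Real.exp (-(c * t))
      = ∫ t in Ioi (0:ℝ), (Real.log (c * t) * Real.exp (-(c * t))
          - Real.log c * Real.exp (-(c * t))) := by
    refine setIntegral_congr_fun measurableSet_Ioi (fun t ht => ?_)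
    rw [Real.log_mul hc.ne' (ne_of_gt ht)]
    ring
  rw [hcong, integral_sub h1 h2, MeasureTheory.integral_const_mul, aux_integral_exp_mul hc]
  have h3 : ∫ t in Ioi (0:ℝ), Real.log (c * t) * Real.exp (-(c * t))
      = -Real.eulerMascheroniConstant / c := by
    have := integral_comp_mul_left_Ioi (fun x => Real.log x * Real.exp (-x)) 0 hc
    simp only [mul_zero] at this
    rw [this, aux_integral_log_exp]
    rw [smul_eq_mul]
    ring
  rw [h3]
  field_simp
  ring

lemma aux_deriv_exp_neg (x : ℝ) :
    HasDerivAt (fun x : ℝ => Real.exp (-x)) (-Real.exp (-x)) x := by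
  simpa [Function.comp_def] using (Real.hasDerivAt_exp (-x)).comp x (hasDerivAt_neg x)

lemma aux_range_exp_neg : (fun x : ℝ => Real.exp (-x)) '' univ = Ioi 0 := by
  rw [image_univ]
  have : (fun x : ℝ => Real.exp (-x)) = Real.exp ∘ Neg.neg := rfl
  rw [this, Set.range_comp, neg_surjective.range_eq, image_univ, Real.range_exp]

lemma aux_inj_exp_neg : InjOn (fun x : ℝ => Real.exp (-x)) univ :=
  (Real.exp_injective.comp neg_injective).injOn

lemma aux_cov (g : ℝ → ℝ) :
    ∫ t in Ioi (0:ℝ), g t = ∫ x : ℝ, Real.exp (-x) * g (Real.exp (-x)) := by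
  have h := integral_image_eq_integral_abs_deriv_smul (f := fun x : ℝ => Real.exp (-x))
    (f' := fun x : ℝ => -Real.exp (-x)) MeasurableSet.univ
    (fun x _ => (aux_deriv_exp_neg x).hasDerivWithinAt) aux_inj_exp_neg g
  rw [aux_range_exp_neg] at h
  rw [h, Measure.restrict_univ]
  refine integral_congr_ae (Eventually.of_forall fun x => ?_)
  simp only [abs_neg, smul_eq_mul, abs_of_pos (Real.exp_pos (-x))]

lemma aux_cov_int (g : ℝ → ℝ) :
    IntegrableOn g (Ioi (0:ℝ)) ↔
      Integrable (fun x : ℝ => Real.exp (-x) * g (Real.exp (-x))) := by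
  have h := integrableOn_image_iff_integrableOn_abs_deriv_smul (f := fun x : ℝ => Real.exp (-x))
    (f' := fun x : ℝ => -Real.exp (-x)) MeasurableSet.univ
    (fun x _ => (aux_deriv_exp_neg x).hasDerivWithinAt) aux_inj_exp_neg g
  rw [aux_range_exp_neg] at h
  rw [h]
  unfold IntegrableOn
  rw [Measure.restrict_univ]
  constructor <;> intro hh <;> refine hh.congr (Eventually.of_forall fun x => ?_) <;>
    simp only [abs_neg, smul_eq_mul, abs_of_pos (Real.exp_pos (-x))]

noncomputable def gF (a x : ℝ) : ℝ := Real.exp (-(a * Real.exp (-x)))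
noncomputable def gf (a x : ℝ) : ℝ := a * Real.exp (-x) * gF a x

lemma gF_continuous (a : ℝ) : Continuous (gF a) := by unfold gF; fun_prop
lemma gf_continuous (a : ℝ) : Continuous (gf a) := by unfold gf gF; fun_prop
lemma gF_pos (a x : ℝ) : 0 < gF a x := Real.exp_pos _
lemma gF_le_one {a : ℝ} (ha : 0 ≤ a) (x : ℝ) : gF a x ≤ 1 := by
  rw [gF, ← Real.exp_zero]
  apply Real.exp_le_exp.mpr
  simp only [neg_nonpos]
  positivity
lemma gf_nonneg {a : ℝ} (ha : 0 ≤ a) (x : ℝ) : 0 ≤ gf a x := by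
  unfold gf gF; positivity

lemma gF_deriv (a x : ℝ) : HasDerivAt (gF a) (gf a x) x := by
  have h1 : HasDerivAt (fun x : ℝ => -(a * Real.exp (-x))) (a * Real.exp (-x)) x := by
    have := ((Real.hasDerivAt_exp (-x)).comp x (hasDerivAt_neg x)).const_mul a
    simpa [Pi.neg_def] using this.neg
  have h2 := (Real.hasDerivAt_exp (-(a * Real.exp (-x)))).comp x h1
  have h3 : gf a x = a * Real.exp (-x) * Real.exp (-(a * Real.exp (-x))) := by
    simp [gf, gF, mul_comm]
  rw [h3, mul_comm]
  exact h2

lemma gf_le {a : ℝ} (ha : 0 < a) (x : ℝ) : gf a x ≤ 4 / a * Real.exp x := by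
  set u : ℝ := a * Real.exp (-x) with hu
  have hu0 : 0 < u := by positivity
  have h1 : u / 2 + 1 ≤ Real.exp (u / 2) := by
    have := Real.add_one_le_exp (u / 2); linarith
  have h2 : u ^ 2 / 4 ≤ Real.exp u := by
    have hsq : (u / 2 + 1) ^ 2 ≤ Real.exp (u / 2) ^ 2 := by
      have h0 : 0 ≤ u / 2 + 1 := by positivity
      nlinarith
    have : Real.exp (u/2) ^ 2 = Real.exp u := by
      rw [sq, ← Real.exp_add]; norm_num
    nlinarith [hsq]
  have hE : Real.exp (-u) * Real.exp u = 1 := by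
    rw [← Real.exp_add]; simp
  have h3 : Real.exp (-u) ≤ 4 / u ^ 2 := by
    rw [le_div_iff₀ (by positivity : (0:ℝ) < u ^ 2)]
    nlinarith [Real.exp_pos (-u), h2]
  have h4 : gf a x = u * Real.exp (-u) := by rw [gf, gF]
  rw [h4]
  calc u * Real.exp (-u) ≤ u * (4 / u ^ 2) := by
        exact mul_le_mul_of_nonneg_left h3 hu0.le
    _ = 4 / u := by field_simp
    _ = 4 / a * Real.exp x := by
        rw [hu, Real.exp_neg]
        field_simp

lemma gf_integrableOn_Iic {a : ℝ} (ha : 0 < a) (b : ℝ) : IntegrableOn (gf a) (Iic b) := by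
  refine Integrable.mono' (((integrableOn_exp_Iic b).const_mul (4 / a)))
    (gf_continuous a).aestronglyMeasurable.restrict
    (Eventually.of_forall fun x => ?_)
  rw [Real.norm_eq_abs, abs_of_nonneg (gf_nonneg ha.le x)]
  exact gf_le ha x

lemma gF_tendsto_atBot {a : ℝ} (ha : 0 < a) : Tendsto (gF a) atBot (𝓝 0) := by
  have h1 : Tendsto (fun x : ℝ => Real.exp (-x)) atBot atTop :=
    Real.tendsto_exp_atTop.comp tendsto_neg_atBot_atTop
  have h2 : Tendsto (fun x : ℝ => a * Real.exp (-x)) atBot atTop :=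
    h1.const_mul_atTop ha
  have h3 : Tendsto (fun x : ℝ => -(a * Real.exp (-x))) atBot atBot :=
    tendsto_neg_atTop_atBot.comp h2
  exact Real.tendsto_exp_atBot.comp h3

lemma gf_integral_Iic {a : ℝ} (ha : 0 < a) (b : ℝ) : ∫ x in Iic b, gf a x = gF a b := by
  have := integral_Iic_of_hasDerivAt_of_tendsto' (fun x _ => gF_deriv a x)
    (gf_integrableOn_Iic ha b) (gF_tendsto_atBot ha)
  simpa using this

noncomputable def gumbelM (a : ℝ) : Measure ℝ :=
  volume.withDensity (fun x => ENNReal.ofReal (gf a x))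

lemma gumbelM_Iic {a : ℝ} (ha : 0 < a) (b : ℝ) :
    gumbelM a (Iic b) = ENNReal.ofReal (gF a b) := by
  rw [gumbelM, withDensity_apply _ measurableSet_Iic,
    ← ofReal_integral_eq_lintegral_ofReal (gf_integrableOn_Iic ha b)
      (Eventually.of_forall fun x => gf_nonneg ha.le x), gf_integral_Iic ha b]

lemma map_eq_gumbelM {Ω : Type*} [MeasureSpace Ω] [IsProbabilityMeasure (ℙ : Measure Ω)]
    {X : Ω → ℝ} (hX : Measurable X) {m : ℝ}
    (hcdf : ∀ x : ℝ, (ℙ {ω | X ω ≤ x}).toReal = Real.exp (-Real.exp (-(x - m)))) :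
    Measure.map X ℙ = gumbelM (Real.exp m) := by
  haveI : IsProbabilityMeasure (Measure.map X ℙ) := Measure.isProbabilityMeasure_map hX.aemeasurable
  refine Measure.ext_of_Iic _ _ (fun b => ?_)
  rw [Measure.map_apply hX measurableSet_Iic]
  have hset : X ⁻¹' (Iic b) = {ω | X ω ≤ b} := rfl
  rw [hset, gumbelM_Iic (Real.exp_pos m) b,
    ← ENNReal.ofReal_toReal (measure_ne_top ℙ _), hcdf b]
  congr 1
  rw [gF]
  congr 2
  rw [← Real.exp_add]
  congr 1
  ring

lemma gfgF_eq (a b x : ℝ) : gf a x * gF b x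
    = Real.exp (-x) * (a * Real.exp (-((a + b) * Real.exp (-x)))) := by
  rw [gf, gF, gF]
  rw [show -((a + b) * Real.exp (-x)) = -(a * Real.exp (-x)) + -(b * Real.exp (-x)) by ring,
    Real.exp_add]
  ring

lemma K1_int {a b : ℝ} (ha : 0 < a) (hb : 0 ≤ b) :
    Integrable (fun x : ℝ => gf a x * gF b x) := by
  have hc : 0 < a + b := by linarith
  have h := (aux_cov_int (fun t => a * Real.exp (-((a + b) * t)))).mp
    ((aux_intble_exp_mul hc).const_mul a)
  exact h.congr (Eventually.of_forall fun x => (gfgF_eq a b x).symm)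

lemma K1_val {a b : ℝ} (ha : 0 < a) (hb : 0 ≤ b) :
    ∫ x : ℝ, gf a x * gF b x = a / (a + b) := by
  have hc : 0 < a + b := by linarith
  rw [integral_congr_ae (Eventually.of_forall fun x => gfgF_eq a b x),
    ← aux_cov (fun t => a * Real.exp (-((a + b) * t))), MeasureTheory.integral_const_mul,
    aux_integral_exp_mul hc]
  field_simp

lemma xgfgF_eq (a b x : ℝ) : x * (gf a x * gF b x)
    = Real.exp (-x) * (a * (-Real.log (Real.exp (-x)) * Real.exp (-((a + b) * Real.exp (-x))))) := by
  rw [Real.log_exp, gfgF_eq]; ring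

lemma K2_int {a b : ℝ} (ha : 0 < a) (hb : 0 ≤ b) :
    Integrable (fun x : ℝ => x * (gf a x * gF b x)) := by
  have hc : 0 < a + b := by linarith
  have h0 : IntegrableOn (fun t => a * (-Real.log t * Real.exp (-((a + b) * t)))) (Ioi (0:ℝ)) := by
    have := ((aux_intble_log_exp_mul hc).neg).const_mul a
    refine this.congr (Eventually.of_forall fun t => ?_)
    simp only [Pi.neg_apply]; ring
  have h := (aux_cov_int _).mp h0
  exact h.congr (Eventually.of_forall fun x => (xgfgF_eq a b x).symm)

lemma K2_val {a b : ℝ} (ha : 0 < a) (hb : 0 ≤ b) :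
    ∫ x : ℝ, x * (gf a x * gF b x)
      = a * ((Real.eulerMascheroniConstant + Real.log (a + b)) / (a + b)) := by
  have hc : 0 < a + b := by linarith
  rw [integral_congr_ae (Eventually.of_forall fun x => xgfgF_eq a b x),
    ← aux_cov (fun t => a * (-Real.log t * Real.exp (-((a + b) * t))))]
  have : ∫ t in Ioi (0:ℝ), a * (-Real.log t * Real.exp (-((a + b) * t)))
      = a * -(∫ t in Ioi (0:ℝ), Real.log t * Real.exp (-((a + b) * t))) := by
    rw [MeasureTheory.integral_const_mul, ← integral_neg]
    congr 1
    exact integral_congr_ae (Eventually.of_forall fun t => by ring)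
  rw [this, aux_integral_log_exp_mul hc]
  field_simp

lemma integral_gumbelM {a : ℝ} (ha : 0 ≤ a) (g : ℝ → ℝ) :
    ∫ x, g x ∂(gumbelM a) = ∫ x, gf a x * g x := by
  rw [gumbelM]
  have h1 : (fun x => ENNReal.ofReal (gf a x))
      = (fun x => (((fun x => (gf a x).toNNReal) x : ℝ≥0) : ℝ≥0∞)) := rfl
  have hm2 : Measurable (fun x => (gf a x).toNNReal) := (gf_continuous a).measurable.real_toNNReal
  rw [h1, integral_withDensity_eq_integral_smul hm2 g]
  refine integral_congr_ae (Eventually.of_forall fun x => ?_)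
  simp only [NNReal.smul_def, smul_eq_mul, Real.coe_toNNReal _ (gf_nonneg ha x)]

lemma integrable_gumbelM_iff {a : ℝ} (ha : 0 ≤ a) (g : ℝ → ℝ) :
    Integrable g (gumbelM a) ↔ Integrable (fun x => g x * gf a x) := by
  have hm : Measurable (fun x => ENNReal.ofReal (gf a x)) :=
    ENNReal.measurable_ofReal.comp (gf_continuous a).measurable
  rw [gumbelM, integrable_withDensity_iff hm (Eventually.of_forall fun x => ENNReal.ofReal_lt_top)]
  constructor <;> intro h <;> refine h.congr (Eventually.of_forall fun x => ?_) <;>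
    simp only [ENNReal.toReal_ofReal (gf_nonneg ha x)]

/-- For independent `X ∼ Gumbel(v,1)` and `Y ∼ Gumbel(w,1)` (CDF `e^{−e^{−(x−μ)}}`),
`E[X | X ≥ Y] = γ + log(e^v + e^w)`. -/
theorem stmt13 {Ω : Type*} [MeasureSpace Ω] [IsProbabilityMeasure (ℙ : Measure Ω)]
    (X Y : Ω → ℝ) (hX : Measurable X) (hY : Measurable Y)
    (hindep : IndepFun X Y ℙ) (v w : ℝ)
    (hXcdf : ∀ x : ℝ, (ℙ {ω | X ω ≤ x}).toReal = Real.exp (-Real.exp (-(x - v))))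
    (hYcdf : ∀ x : ℝ, (ℙ {ω | Y ω ≤ x}).toReal = Real.exp (-Real.exp (-(x - w)))) :
    (∫ ω in {ω | Y ω ≤ X ω}, X ω ∂ℙ) / (ℙ {ω | Y ω ≤ X ω}).toReal =
      Real.eulerMascheroniConstant + Real.log (Real.exp v + Real.exp w) := by
  set a := Real.exp v with hav
  set b := Real.exp w with hbw
  have ha : 0 < a := Real.exp_pos v
  have hb : 0 < b := Real.exp_pos w
  have hc : 0 < a + b := by linarith
  set μ := gumbelM a with hμdef
  set ν := gumbelM b with hνdef
  have hμ : Measure.map X ℙ = μ := map_eq_gumbelM hX hXcdf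
  have hν : Measure.map Y ℙ = ν := map_eq_gumbelM hY hYcdf
  haveI : IsProbabilityMeasure μ := hμ ▸ Measure.isProbabilityMeasure_map hX.aemeasurable
  haveI : IsProbabilityMeasure ν := hν ▸ Measure.isProbabilityMeasure_map hY.aemeasurable
  have hπ : Measure.map (fun ω => (X ω, Y ω)) ℙ = μ.prod ν := by
    rw [← hμ, ← hν]
    exact (indepFun_iff_map_prod_eq_prod_map_map hX.aemeasurable hY.aemeasurable).mp hindep
  have hS : MeasurableSet {q : ℝ × ℝ | q.2 ≤ q.1} := measurableSet_le measurable_snd measurable_fst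
  have hS0 : MeasurableSet {ω | Y ω ≤ X ω} := measurableSet_le hY hX
  have hνIic : ∀ x : ℝ, (ν (Iic x)).toReal = gF b x := fun x => by
    rw [hνdef, gumbelM_Iic hb x, ENNReal.toReal_ofReal (gF_pos b x).le]
  set G : ℝ × ℝ → ℝ := fun p => Set.indicator {q : ℝ × ℝ | q.2 ≤ q.1} (fun q => q.1) p with hGdef
  have hGm : Measurable G := measurable_fst.indicator hS
  have hGinner : ∀ x : ℝ, (fun y => G (x, y)) = Set.indicator (Iic x) (fun _ => x) := by
    intro x; funext y
    simp [hGdef, Set.indicator_apply, Set.mem_setOf_eq, Set.mem_Iic]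
  have hGint : Integrable G (μ.prod ν) := by
    refine (integrable_prod_iff hGm.aestronglyMeasurable).mpr ⟨?_, ?_⟩
    · exact Eventually.of_forall fun x => by
        rw [hGinner x]; exact (integrable_const x).indicator measurableSet_Iic
    · have heq : (fun x => ∫ y, ‖G (x, y)‖ ∂ν) = fun x => gF b x * |x| := by
        funext x
        have h2 : (fun y => ‖G (x, y)‖) = Set.indicator (Iic x) (fun _ => |x|) := by
          funext y
          simp only [hGdef, Set.indicator_apply, Set.mem_setOf_eq, Set.mem_Iic,
            Real.norm_eq_abs, apply_ite abs, abs_zero]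
        rw [h2, integral_indicator_const _ measurableSet_Iic, measureReal_def, hνIic x, smul_eq_mul]
      rw [heq, hμdef, integrable_gumbelM_iff ha.le]
      refine (K2_int ha hb.le).abs.congr (Eventually.of_forall fun x => ?_)
      show |x * (gf a x * gF b x)| = gF b x * |x| * gf a x
      rw [abs_mul, abs_of_nonneg (mul_nonneg (gf_nonneg ha.le x) (gF_pos b x).le)]
      ring
  have hnum : (∫ ω in {ω | Y ω ≤ X ω}, X ω ∂ℙ)
      = a * ((Real.eulerMascheroniConstant + Real.log (a + b)) / (a + b)) := by
    have e1 : (∫ ω in {ω | Y ω ≤ X ω}, X ω ∂ℙ) = ∫ ω, G ((X ω, Y ω)) ∂ℙ := by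
      rw [← integral_indicator hS0]
      refine integral_congr_ae (Eventually.of_forall fun ω => ?_)
      simp [hGdef, Set.indicator_apply, Set.mem_setOf_eq]
    rw [e1, ← integral_map (hX.prodMk hY).aemeasurable hGm.aestronglyMeasurable, hπ,
      integral_prod _ hGint]
    have e2 : (fun x => ∫ y, G (x, y) ∂ν) = fun x => gF b x * x := by
      funext x
      rw [hGinner x, integral_indicator_const _ measurableSet_Iic, measureReal_def, hνIic x, smul_eq_mul]
    rw [e2, hμdef, integral_gumbelM ha.le, ← K2_val ha hb.le]
    exact integral_congr_ae (Eventually.of_forall fun x => by ring)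
  have hden : (ℙ {ω | Y ω ≤ X ω}).toReal = a / (a + b) := by
    have e1 : ℙ {ω | Y ω ≤ X ω} = (μ.prod ν) {q : ℝ × ℝ | q.2 ≤ q.1} := by
      rw [← hπ, Measure.map_apply (hX.prodMk hY) hS]
      rfl
    rw [e1]
    have e2 : ((μ.prod ν) {q : ℝ × ℝ | q.2 ≤ q.1}).toReal
        = ∫ p, Set.indicator {q : ℝ × ℝ | q.2 ≤ q.1} (fun _ => (1:ℝ)) p ∂(μ.prod ν) := by
      rw [integral_indicator_const _ hS, smul_eq_mul, mul_one, measureReal_def]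
    rw [e2, integral_prod _ ((integrable_const (1:ℝ)).indicator hS)]
    have e3 : (fun x => ∫ y, Set.indicator {q : ℝ × ℝ | q.2 ≤ q.1} (fun _ => (1:ℝ)) (x, y) ∂ν)
        = fun x => gF b x := by
      funext x
      have h2 : (fun y => Set.indicator {q : ℝ × ℝ | q.2 ≤ q.1} (fun _ => (1:ℝ)) (x, y))
          = Set.indicator (Iic x) (fun _ => (1:ℝ)) := by
        funext y
        simp [Set.indicator_apply, Set.mem_setOf_eq, Set.mem_Iic]
      rw [h2, integral_indicator_const _ measurableSet_Iic, measureReal_def, hνIic x, smul_eq_mul, mul_one]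
    rw [e3, hμdef, integral_gumbelM ha.le]
    have e4 : (fun x => gf a x * gF b x) = fun x : ℝ => gf a x * gF b x := rfl
    rw [show (∫ x, gf a x * gF b x) = a / (a + b) from K1_val ha hb.le]
  rw [hnum, hden]
  rw [show Real.log (Real.exp v + Real.exp w) = Real.log (a + b) from rfl]
  field_simp
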